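/- Let H ∈ ℝ^{n×d} have singular value decomposition H = UΣVᵀ with singular values σ_1 ≥ σ_2 ≥ … ≥ σ_r ≥ 0 (r = min(n,d)) and orthonormal left singular vectors u_1,…,u_r ∈ ℝⁿ (the columns of U). Then the Dirichlet energy of H decomposes as E_G(H) = Σ_{k=1}^r σ_k² · E_G(u_k). -/
import Mathlib


open Matrix

/-- The Dirichlet energy `E_G(x) = Σ_{i,j} A_{ij} (x_i - x_j)^2` of a vector. -/
noncomputable def dirichletEnergy {n : ℕ} (A : Matrix (Fin n) (Fin n) ℝ)
    (x : Fin n → ℝ) : ℝ :=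
  ∑ i, ∑ j, A i j * (x i - x j) ^ 2

/-- The Dirichlet energy of a matrix `X ∈ ℝ^{n×d}` with rows `x_1,…,x_n`:
`E_G(X) = Σ_{i,j} A_{ij} ‖x_i - x_j‖²`. -/
noncomputable def dirichletEnergyM {n d : ℕ} (A : Matrix (Fin n) (Fin n) ℝ)
    (X : Matrix (Fin n) (Fin d) ℝ) : ℝ :=
  ∑ i, ∑ j, A i j * ∑ t, (X i t - X j t) ^ 2

/-- A family of vectors is orthonormal. -/
def OrthonormalFamily {r n : ℕ} (u : Fin r → Fin n → ℝ) : Prop :=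
  ∀ j k, u j ⬝ᵥ u k = if j = k then (1 : ℝ) else 0

lemma sum_sq_ortho {r d : ℕ} (v : Fin r → Fin d → ℝ)
    (hv : OrthonormalFamily v) (c : Fin r → ℝ) :
    ∑ t, (∑ k, c k * v k t) ^ 2 = ∑ k, c k ^ 2 := by
  have hvt : ∀ k l : Fin r, ∑ t, v k t * v l t = if k = l then (1 : ℝ) else 0 :=
    fun k l => hv k l
  calc ∑ t, (∑ k, c k * v k t) ^ 2
      = ∑ t, ∑ k, ∑ l, (c k * c l) * (v k t * v l t) := by
        refine Finset.sum_congr rfl fun t _ => ?_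
        rw [sq, Finset.sum_mul_sum]
        exact Finset.sum_congr rfl fun k _ => Finset.sum_congr rfl fun l _ => by ring
    _ = ∑ k, ∑ l, (c k * c l) * (∑ t, v k t * v l t) := by
        rw [Finset.sum_comm]
        refine Finset.sum_congr rfl fun k _ => ?_
        rw [Finset.sum_comm]
        exact Finset.sum_congr rfl fun l _ => (Finset.mul_sum _ _ _).symm
    _ = ∑ k, c k ^ 2 := by
        refine Finset.sum_congr rfl fun k _ => ?_
        simp only [hvt]
        simp [Finset.sum_ite_eq', sq]

/-- If `H = U Σ Vᵀ` is a singular value decomposition of `H` with singular values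
`σ_1 ≥ … ≥ σ_r ≥ 0` (`r = min(n,d)`) and orthonormal left singular vectors
`u_1,…,u_r`, then `E_G(H) = Σ_k σ_k² E_G(u_k)`. -/
theorem energyM_svd_decomposition (n d : ℕ) (hn : 1 ≤ n) (hd : 1 ≤ d)
    (A : Matrix (Fin n) (Fin n) ℝ) (hsym : A.IsSymm)
    (hnonneg : ∀ i j, 0 ≤ A i j) (hdiag : ∀ i, A i i = 0)
    (σ : Fin (min n d) → ℝ) (hσnonneg : ∀ k, 0 ≤ σ k) (hσmono : Antitone σ)
    (u : Fin (min n d) → Fin n → ℝ) (v : Fin (min n d) → Fin d → ℝ)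
    (hu : OrthonormalFamily u) (hv : OrthonormalFamily v)
    (H : Matrix (Fin n) (Fin d) ℝ)
    (hH : H = ∑ k, σ k • Matrix.vecMulVec (u k) (v k)) :
    dirichletEnergyM A H = ∑ k, σ k ^ 2 * dirichletEnergy A (u k) := by
  have hentry : ∀ (a : Fin n) (t : Fin d), H a t = ∑ k, σ k * u k a * v k t := by
    intro a t
    rw [hH]
    simp [Matrix.sum_apply, Matrix.vecMulVec_apply, mul_assoc]
  have key : ∀ i j : Fin n,
      ∑ t, (H i t - H j t) ^ 2 = ∑ k, σ k ^ 2 * (u k i - u k j) ^ 2 := by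
    intro i j
    have h1 : ∀ t, H i t - H j t = ∑ k, (σ k * (u k i - u k j)) * v k t := by
      intro t
      rw [hentry, hentry, ← Finset.sum_sub_distrib]
      exact Finset.sum_congr rfl fun k _ => by ring
    calc ∑ t, (H i t - H j t) ^ 2
        = ∑ t, (∑ k, (σ k * (u k i - u k j)) * v k t) ^ 2 := by
          exact Finset.sum_congr rfl fun t _ => by rw [h1]
      _ = ∑ k, (σ k * (u k i - u k j)) ^ 2 := sum_sq_ortho v hv _
      _ = ∑ k, σ k ^ 2 * (u k i - u k j) ^ 2 :=
          Finset.sum_congr rfl fun k _ => by ring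
  unfold dirichletEnergyM dirichletEnergy
  simp only [key]
  calc ∑ i, ∑ j, A i j * ∑ k, σ k ^ 2 * (u k i - u k j) ^ 2
      = ∑ i, ∑ k, ∑ j, A i j * (σ k ^ 2 * (u k i - u k j) ^ 2) := by
        refine Finset.sum_congr rfl fun i _ => ?_
        rw [Finset.sum_comm]
        exact Finset.sum_congr rfl fun j _ => Finset.mul_sum _ _ _
    _ = ∑ k, ∑ i, ∑ j, A i j * (σ k ^ 2 * (u k i - u k j) ^ 2) := Finset.sum_comm
    _ = ∑ k, σ k ^ 2 * ∑ i, ∑ j, A i j * (u k i - u k j) ^ 2 := by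
        refine Finset.sum_congr rfl fun k _ => ?_
        rw [Finset.mul_sum]
        refine Finset.sum_congr rfl fun i _ => ?_
        rw [Finset.mul_sum]
        exact Finset.sum_congr rfl fun j _ => by ring
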